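/- Let (E,ρ) be a metric space and P a Markov operator satisfying the asymptotic log-Harnack inequality P(log f)(x) ≤ log(Pf)(y) + Φ(x,y) + Ψ(x,y)‖∇ log f‖_∞ for all bounded positive f with ‖∇ log f‖_∞ < ∞. Fix a measurable set A, ε > 0, and let A_ε = {z : ρ(z,A) < ε}. Then for every n ≥ 1 and all x,y ∈ E: P1_A(x) ≤ (1/n)·log(1 + e^n·P1_{A_ε}(y)) + (1/n)·Φ(x,y) + ε^{-1}·Ψ(x,y). -/

import Mathlib

open Filter MeasureTheory Real Set ProbabilityTheory

/-- `|∇f|(x) := limsup_{y→x} |f(x)−f(y)|/ρ(x,y)`. -/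
noncomputable def gradAt {E : Type*} [MetricSpace E] (f : E → ℝ) (x : E) : ℝ :=
  Filter.limsup (fun y => |f x - f y| / dist x y) (nhdsWithin x {x}ᶜ)

/-- `‖∇f‖_∞ := sup_x |∇f|(x)`. -/
noncomputable def gradNorm {E : Type*} [MetricSpace E] (f : E → ℝ) : ℝ :=
  ⨆ x, gradAt f x

lemma aux_div_split (L P S e n : ℝ) (hn : n ≠ 0) :
    (L + P + S * (n * e)) / n = (1/n)*L + (1/n)*P + e*S := by
  field_simp

lemma gradAt_le_of_lip {E : Type*} [MetricSpace E] {h : E → ℝ} {L : ℝ} (hL : 0 ≤ L)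
    (hlip : ∀ a b, |h a - h b| ≤ L * dist a b) (x : E) : gradAt h x ≤ L := by
  unfold gradAt
  by_cases hx : (nhdsWithin x {x}ᶜ).NeBot
  · apply Filter.limsup_le_of_le
    · apply Filter.IsBoundedUnder.isCoboundedUnder_le
      exact Filter.isBoundedUnder_of ⟨0, fun y => div_nonneg (abs_nonneg _) dist_nonneg⟩
    · filter_upwards [self_mem_nhdsWithin] with y hy
      have hyx : y ≠ x := hy
      have hd : 0 < dist x y := dist_pos.2 (Ne.symm hyx)
      rw [div_le_iff₀ hd]
      exact hlip x y
  · rw [Filter.not_neBot] at hx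
    rw [hx, Filter.limsup, Filter.limsSup, Filter.map_bot]
    have : {a : ℝ | ∀ᶠ n in (⊥ : Filter ℝ), n ≤ a} = Set.univ := by ext a; simp
    rw [this, Real.sInf_of_not_bddBelow (by simpa using not_bddBelow_univ)]
    exact hL

/-- Key estimate for asymptotic irreducibility: from the asymptotic log-Harnack
inequality, `P1_A(x) ≤ (1/n)·log(1 + e^n·P1_{A_ε}(y)) + (1/n)·Φ(x,y) + ε⁻¹·Ψ(x,y)`. -/
theorem asymptotic_irreducibility_inequality
    {E : Type*} [MetricSpace E] [MeasurableSpace E] [OpensMeasurableSpace E]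
    (κ : Kernel E E) [IsMarkovKernel κ]
    (Φ Ψ : E → E → ℝ)
    (hΦnonneg : ∀ x y, 0 ≤ Φ x y) (hΨnonneg : ∀ x y, 0 ≤ Ψ x y)
    -- asymptotic log-Harnack inequality
    (hALH : ∀ f : E → ℝ, Measurable f → (∀ z, 0 < f z) → (∃ C, ∀ z, f z ≤ C) →
      BddAbove (Set.range (gradAt (fun z => Real.log (f z)))) →
      ∀ x y : E, ∫ z, Real.log (f z) ∂(κ x) ≤
        Real.log (∫ z, f z ∂(κ y)) + Φ x y +
          Ψ x y * gradNorm (fun z => Real.log (f z)))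
    (A : Set E) (hA : MeasurableSet A) (ε : ℝ) (hε : 0 < ε) :
    ∀ n : ℕ, 1 ≤ n → ∀ x y : E,
      ((κ x) A).toReal ≤
        (1 / (n : ℝ)) * Real.log (1 + Real.exp (n : ℝ) *
            ((κ y) {z | Metric.infDist z A < ε}).toReal)
        + (1 / (n : ℝ)) * Φ x y + ε⁻¹ * Ψ x y := by
  intro n hn x y
  have hnpos : (0:ℝ) < n := by exact_mod_cast hn
  -- the test function
  set g : E → ℝ := fun z => ε⁻¹ * max (ε - Metric.infDist z A) 0 with hg
  set f : E → ℝ := fun z => Real.exp ((n : ℝ) * g z) with hf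
  have hginfd : Continuous fun z => Metric.infDist z A :=
    Metric.continuous_infDist_pt A
  have hgcont : Continuous g := by continuity
  have hgmeas : Measurable g := hgcont.measurable
  have hfmeas : Measurable f :=
    (Real.continuous_exp.comp (continuous_const.mul hgcont)).measurable
  have hg0 : ∀ z, 0 ≤ g z := fun z => by
    have : (0:ℝ) ≤ max (ε - Metric.infDist z A) 0 := le_max_right _ _
    positivity
  have hg1 : ∀ z, g z ≤ 1 := fun z => by
    rw [hg]
    have h1 : max (ε - Metric.infDist z A) 0 ≤ ε :=
      max_le (by linarith [Metric.infDist_nonneg (s := A) (x := z)]) hε.le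
    calc ε⁻¹ * max (ε - Metric.infDist z A) 0 ≤ ε⁻¹ * ε := by
          exact mul_le_mul_of_nonneg_left h1 (by positivity)
      _ = 1 := inv_mul_cancel₀ hε.ne'
  have hfpos : ∀ z, 0 < f z := fun z => Real.exp_pos _
  have hfbdd : ∃ C, ∀ z, f z ≤ C := ⟨Real.exp n, fun z => by
    apply Real.exp_le_exp.2
    nlinarith [hg1 z, hg0 z]⟩
  have hlogf : ∀ z, Real.log (f z) = (n : ℝ) * g z := fun z => Real.log_exp _
  -- Lipschitz bound
  have hglip : ∀ a b, |g a - g b| ≤ ε⁻¹ * dist a b := by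
    intro a b
    have h1 : |Metric.infDist a A - Metric.infDist b A| ≤ dist a b := by
      rw [abs_sub_le_iff]
      constructor
      · linarith [Metric.infDist_le_infDist_add_dist (x := a) (y := b) (s := A)]
      · rw [dist_comm]
        linarith [Metric.infDist_le_infDist_add_dist (x := b) (y := a) (s := A)]
    have h2 : |max (ε - Metric.infDist a A) 0 - max (ε - Metric.infDist b A) 0|
        ≤ dist a b := by
      refine le_trans (abs_max_sub_max_le_abs _ _ _) ?_
      rw [show ε - Metric.infDist a A - (ε - Metric.infDist b A)
        = -(Metric.infDist a A - Metric.infDist b A) by ring, abs_neg]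
      exact h1
    calc |g a - g b| = ε⁻¹ * |max (ε - Metric.infDist a A) 0
          - max (ε - Metric.infDist b A) 0| := by
          rw [hg]; rw [← mul_sub, abs_mul, abs_of_nonneg (by positivity : (0:ℝ) ≤ ε⁻¹)]
      _ ≤ ε⁻¹ * dist a b := mul_le_mul_of_nonneg_left h2 (by positivity)
  have hloglip : ∀ a b, |Real.log (f a) - Real.log (f b)| ≤ ((n:ℝ) * ε⁻¹) * dist a b := by
    intro a b
    rw [hlogf, hlogf, ← mul_sub, abs_mul, abs_of_nonneg hnpos.le, mul_assoc]
    exact mul_le_mul_of_nonneg_left (hglip a b) hnpos.le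
  have hLnn : (0:ℝ) ≤ (n:ℝ) * ε⁻¹ := by positivity
  have hgradle : ∀ z, gradAt (fun z => Real.log (f z)) z ≤ (n:ℝ) * ε⁻¹ :=
    gradAt_le_of_lip hLnn hloglip
  have hbdd : BddAbove (Set.range (gradAt (fun z => Real.log (f z)))) := by
    refine ⟨(n:ℝ) * ε⁻¹, ?_⟩
    rintro _ ⟨z, rfl⟩; exact hgradle z
  have : Nonempty E := ⟨x⟩
  have hgradnorm : gradNorm (fun z => Real.log (f z)) ≤ (n:ℝ) * ε⁻¹ :=
    ciSup_le hgradle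
  have key := hALH f hfmeas hfpos hfbdd hbdd x y
  -- lower bound on ∫ log f
  have hprobx : IsProbabilityMeasure (κ x) := inferInstance
  have hproby : IsProbabilityMeasure (κ y) := inferInstance
  have hint_g : Integrable g (κ x) := by
    refine Integrable.mono' (integrable_const 1) hgmeas.aestronglyMeasurable ?_
    exact Filter.Eventually.of_forall fun z => by
      rw [Real.norm_eq_abs, abs_of_nonneg (hg0 z)]; exact hg1 z
  have hind_le : ∀ z, A.indicator (fun _ => (1:ℝ)) z ≤ g z := by
    intro z
    by_cases hz : z ∈ A
    · rw [Set.indicator_of_mem hz]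
      have : Metric.infDist z A = 0 := Metric.infDist_zero_of_mem hz
      rw [hg]; simp only [this, sub_zero, max_eq_left hε.le]
      rw [inv_mul_cancel₀ hε.ne']
    · rw [Set.indicator_of_notMem hz]; exact hg0 z
  have hintA : ∫ z, A.indicator (fun _ => (1:ℝ)) z ∂(κ x) = ((κ x) A).toReal :=
    MeasureTheory.integral_indicator_one hA
  have h1 : ((κ x) A).toReal ≤ ∫ z, g z ∂(κ x) := by
    rw [← hintA]
    refine integral_mono ?_ hint_g hind_le
    exact (integrable_const (1:ℝ)).indicator hA
  have hlow : (n:ℝ) * ((κ x) A).toReal ≤ ∫ z, Real.log (f z) ∂(κ x) := by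
    have : ∫ z, Real.log (f z) ∂(κ x) = (n:ℝ) * ∫ z, g z ∂(κ x) := by
      simp_rw [hlogf]; rw [integral_const_mul]
    rw [this]
    exact mul_le_mul_of_nonneg_left h1 hnpos.le
  -- upper bound on ∫ f
  set Aε : Set E := {z | Metric.infDist z A < ε} with hAε
  have hAεmeas : MeasurableSet Aε := (isOpen_lt hginfd continuous_const).measurableSet
  have hf_le : ∀ z, f z ≤ 1 + Real.exp n * Aε.indicator (fun _ => (1:ℝ)) z := by
    intro z
    by_cases hz : z ∈ Aε
    · rw [Set.indicator_of_mem hz]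
      have : f z ≤ Real.exp n := by
        apply Real.exp_le_exp.2; nlinarith [hg1 z, hg0 z]
      nlinarith [Real.exp_pos (n:ℝ)]
    · rw [Set.indicator_of_notMem hz]
      have hzε : ε ≤ Metric.infDist z A := not_lt.1 hz
      have : g z = 0 := by
        rw [hg]; simp only [max_eq_right (by linarith : ε - Metric.infDist z A ≤ 0)]
        ring
      rw [hf]; simp [this]
  have hint_f : Integrable f (κ y) := by
    obtain ⟨C, hC⟩ := hfbdd
    refine Integrable.mono' (integrable_const C) hfmeas.aestronglyMeasurable ?_
    exact Filter.Eventually.of_forall fun z => by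
      rw [Real.norm_eq_abs, abs_of_pos (hfpos z)]; exact hC z
  have hint_rhs : Integrable (fun z => 1 + Real.exp n * Aε.indicator (fun _ => (1:ℝ)) z) (κ y) := by
    apply Integrable.add (integrable_const 1)
    exact (((integrable_const (1:ℝ)).indicator hAεmeas).const_mul _)
  have hup : ∫ z, f z ∂(κ y) ≤ 1 + Real.exp n * ((κ y) Aε).toReal := by
    calc ∫ z, f z ∂(κ y) ≤ ∫ z, (1 + Real.exp n * Aε.indicator (fun _ => (1:ℝ)) z) ∂(κ y) :=
          integral_mono hint_f hint_rhs hf_le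
      _ = 1 + Real.exp n * ((κ y) Aε).toReal := by
          have hAεint : ∫ z, Aε.indicator (fun _ => (1:ℝ)) z ∂(κ y) = ((κ y) Aε).toReal :=
            MeasureTheory.integral_indicator_one hAεmeas
          rw [integral_add (integrable_const 1)
            (((integrable_const (1:ℝ)).indicator hAεmeas).const_mul _)]
          rw [integral_const, integral_const_mul, hAεint]
          simp
  have hfpos_int : (0:ℝ) < ∫ z, f z ∂(κ y) := by
    have h1le : ∀ z, (1:ℝ) ≤ f z := fun z => by
      rw [hf]; calc (1:ℝ) = Real.exp 0 := (Real.exp_zero).symm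
        _ ≤ _ := Real.exp_le_exp.2 (by nlinarith [hg0 z])
    calc (0:ℝ) < 1 := one_pos
      _ = ∫ _, (1:ℝ) ∂(κ y) := by simp
      _ ≤ ∫ z, f z ∂(κ y) := integral_mono (integrable_const 1) hint_f h1le
  have hlog_le : Real.log (∫ z, f z ∂(κ y)) ≤
      Real.log (1 + Real.exp n * ((κ y) Aε).toReal) :=
    Real.log_le_log hfpos_int hup
  -- combine
  have hΨterm : Ψ x y * gradNorm (fun z => Real.log (f z)) ≤ Ψ x y * ((n:ℝ) * ε⁻¹) :=
    mul_le_mul_of_nonneg_left hgradnorm (hΨnonneg x y)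
  have main : (n:ℝ) * ((κ x) A).toReal ≤
      Real.log (1 + Real.exp n * ((κ y) Aε).toReal) + Φ x y + Ψ x y * ((n:ℝ) * ε⁻¹) := by
    calc (n:ℝ) * ((κ x) A).toReal ≤ ∫ z, Real.log (f z) ∂(κ x) := hlow
      _ ≤ Real.log (∫ z, f z ∂(κ y)) + Φ x y + Ψ x y * gradNorm (fun z => Real.log (f z)) := key
      _ ≤ _ := by linarith [hΨterm, hlog_le]
  calc ((κ x) A).toReal
      ≤ (Real.log (1 + Real.exp n * ((κ y) Aε).toReal) + Φ x y + Ψ x y * ((n:ℝ) * ε⁻¹)) / n := by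
        rw [le_div_iff₀ hnpos, mul_comm]
        exact main
    _ = (1 / (n : ℝ)) * Real.log (1 + Real.exp (n : ℝ) * ((κ y) Aε).toReal)
        + (1 / (n : ℝ)) * Φ x y + ε⁻¹ * Ψ x y :=
        aux_div_split _ _ _ _ _ (ne_of_gt hnpos)
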